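/- Let G be a divisible nilpotent group of nilpotency class s. Then every term Z_i(G) of the upper central series of G (1 ≤ i ≤ s) is divisible: for every z ∈ Z_i(G) and every positive integer n there exists w ∈ Z_i(G) with w^n = z. -/

import Mathlib

universe u

open Subgroup QuotientGroup

/-- In a divisible nilpotent group, any `n`-th root of a central element is central. -/
theorem root_central : ∀ (s : ℕ) (G : Type u) [Group G],
    (∀ g : G, ∀ n : ℕ, 0 < n → ∃ h : G, h ^ n = g) →
    Subgroup.upperCentralSeries G s = ⊤ →
    ∀ x : G, ∀ n : ℕ, 0 < n → x ^ n ∈ Subgroup.center G → x ∈ Subgroup.center G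
  | 0, G, _, _, hs, x, n, hn, hx => by
    have htriv : ∀ g : G, g = 1 := by
      intro g
      have : g ∈ Subgroup.upperCentralSeries G 0 := hs.symm ▸ Subgroup.mem_top g
      simpa [Subgroup.upperCentralSeries_zero] using this
    rw [Subgroup.mem_center_iff]
    intro g
    rw [htriv g, htriv x]
  | s + 1, G, _, hdiv, hs, x, n, hn, hx => by
    -- the quotient by the center is divisible and has class ≤ s
    have hdivQ : ∀ g : G ⧸ Subgroup.center G, ∀ m : ℕ, 0 < m → ∃ h, h ^ m = g := by
      intro g m hm
      obtain ⟨g', rfl⟩ := QuotientGroup.mk'_surjective (Subgroup.center G) g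
      obtain ⟨h, hh⟩ := hdiv g' m hm
      exact ⟨QuotientGroup.mk' _ h, by rw [← map_pow, hh]⟩
    have hcom : comap (QuotientGroup.mk' (Subgroup.center G))
        (Subgroup.upperCentralSeries (G ⧸ Subgroup.center G) s) = ⊤ := by
      rw [Subgroup.comap_upperCentralSeries_quotient_center]; exact hs
    have hsQ : Subgroup.upperCentralSeries (G ⧸ Subgroup.center G) s = ⊤ := by
      rw [eq_top_iff]
      intro g _
      obtain ⟨g', rfl⟩ := QuotientGroup.mk'_surjective (Subgroup.center G) g
      have : g' ∈ comap (QuotientGroup.mk' (Subgroup.center G))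
          (Subgroup.upperCentralSeries (G ⧸ Subgroup.center G) s) := hcom.symm ▸ Subgroup.mem_top g'
      exact this
    -- the image of x is central in the quotient, hence x ∈ Z₂(G)
    have hxQ : (QuotientGroup.mk' (Subgroup.center G)) x ∈
        Subgroup.center (G ⧸ Subgroup.center G) := by
      apply root_central s (G ⧸ Subgroup.center G) hdivQ hsQ _ n hn
      have : ((QuotientGroup.mk' (Subgroup.center G)) x) ^ n = 1 := by
        rw [← map_pow, ← MonoidHom.mem_ker, QuotientGroup.ker_mk']
        exact hx
      rw [this]
      exact Subgroup.one_mem _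
    have hx2 : x ∈ Subgroup.upperCentralSeries G 2 := by
      rw [← Subgroup.comap_upperCentralSeries_quotient_center 1, Subgroup.mem_comap,
        Subgroup.upperCentralSeries_one]
      exact hxQ
    -- commutators of x with anything are central
    have hcomm : ∀ h : G, x * h * x⁻¹ * h⁻¹ ∈ Subgroup.center G := by
      intro h
      have := (Subgroup.mem_upperCentralSeries_succ_iff (n := 1)).mp hx2 h
      rwa [Subgroup.upperCentralSeries_one] at this
    -- key computation: x commutes with every n-th power
    have key : ∀ h : G, x * h ^ n = h ^ n * x := by
      intro h
      set c := x * h * x⁻¹ * h⁻¹ with hcdef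
      have hc : c ∈ Subgroup.center G := hcomm h
      have hcmul : ∀ a : G, a * c = c * a := fun a => Subgroup.mem_center_iff.mp hc a
      have e1 : x * h ^ n * x⁻¹ = c ^ n * h ^ n := by
        calc x * h ^ n * x⁻¹ = (x * h * x⁻¹) ^ n := conj_pow.symm
          _ = (c * h) ^ n := by rw [hcdef]; group
          _ = c ^ n * h ^ n := (Commute.mul_pow (hcmul h).symm n)
      have e2 : h * (x⁻¹) ^ n * h⁻¹ = (x⁻¹) ^ n * c ^ n := by
        calc h * (x⁻¹) ^ n * h⁻¹ = (h * x⁻¹ * h⁻¹) ^ n := conj_pow.symm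
          _ = (x⁻¹ * c) ^ n := by rw [hcdef]; group
          _ = (x⁻¹) ^ n * c ^ n := (Commute.mul_pow (hcmul x⁻¹) n)
      have hxn : ∀ a : G, a * x ^ n = x ^ n * a := fun a => Subgroup.mem_center_iff.mp hx a
      have e3 : c ^ n = 1 := by
        have l1 : h * (x⁻¹) ^ n * h⁻¹ = (x⁻¹) ^ n := by
          rw [inv_pow]
          have hco : Commute h ((x ^ n)⁻¹) := Commute.inv_right (hxn h)
          rw [hco.eq, mul_assoc, mul_inv_cancel, mul_one]
        have l2 : (x⁻¹) ^ n = (x⁻¹) ^ n * c ^ n := l1.symm.trans e2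
        exact (left_eq_mul.mp l2)
      rw [e3, one_mul] at e1
      calc x * h ^ n = (x * h ^ n * x⁻¹) * x := by group
        _ = h ^ n * x := by rw [e1]
    rw [Subgroup.mem_center_iff]
    intro g
    obtain ⟨h, rfl⟩ := hdiv g n hn
    exact (key h).symm

/-- Auxiliary induction: `Z_{i+1}` is divisible in a divisible nilpotent group. -/
theorem ucs_div_aux : ∀ (i : ℕ) (G : Type u) [Group G],
    (∀ g : G, ∀ n : ℕ, 0 < n → ∃ h : G, h ^ n = g) →
    ∀ s : ℕ, Subgroup.upperCentralSeries G s = ⊤ →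
    ∀ z ∈ Subgroup.upperCentralSeries G (i + 1), ∀ n : ℕ, 0 < n →
      ∃ w ∈ Subgroup.upperCentralSeries G (i + 1), w ^ n = z
  | 0, G, _, hdiv, s, hs, z, hz, n, hn => by
    rw [Subgroup.upperCentralSeries_one] at hz ⊢
    obtain ⟨x, hx⟩ := hdiv z n hn
    refine ⟨x, ?_, hx⟩
    exact root_central s G hdiv hs x n hn (hx.symm ▸ hz)
  | i + 1, G, _, hdiv, s, hs, z, hz, n, hn => by
    cases s with
    | zero =>
      have htriv : ∀ g : G, g = 1 := by
        intro g
        have : g ∈ Subgroup.upperCentralSeries G 0 := hs.symm ▸ Subgroup.mem_top g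
        simpa [Subgroup.upperCentralSeries_zero] using this
      exact ⟨z, hz, by rw [htriv z, one_pow]⟩
    | succ t =>
      have hdivQ : ∀ g : G ⧸ Subgroup.center G, ∀ m : ℕ, 0 < m → ∃ h, h ^ m = g := by
        intro g m hm
        obtain ⟨g', rfl⟩ := QuotientGroup.mk'_surjective (Subgroup.center G) g
        obtain ⟨h, hh⟩ := hdiv g' m hm
        exact ⟨QuotientGroup.mk' _ h, by rw [← map_pow, hh]⟩
      have hcom : comap (QuotientGroup.mk' (Subgroup.center G))
          (Subgroup.upperCentralSeries (G ⧸ Subgroup.center G) t) = ⊤ := by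
        rw [Subgroup.comap_upperCentralSeries_quotient_center]; exact hs
      have hsQ : Subgroup.upperCentralSeries (G ⧸ Subgroup.center G) t = ⊤ := by
        rw [eq_top_iff]
        intro g _
        obtain ⟨g', rfl⟩ := QuotientGroup.mk'_surjective (Subgroup.center G) g
        have : g' ∈ comap (QuotientGroup.mk' (Subgroup.center G))
            (Subgroup.upperCentralSeries (G ⧸ Subgroup.center G) t) := hcom.symm ▸ Subgroup.mem_top g'
        exact this
      have hzQ : (QuotientGroup.mk' (Subgroup.center G)) z ∈
          Subgroup.upperCentralSeries (G ⧸ Subgroup.center G) (i + 1) := by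
        rw [← Subgroup.mem_comap, Subgroup.comap_upperCentralSeries_quotient_center]
        exact hz
      obtain ⟨wq, hwq, hwqn⟩ := ucs_div_aux i (G ⧸ Subgroup.center G) hdivQ t hsQ _ hzQ n hn
      obtain ⟨w, rfl⟩ := QuotientGroup.mk'_surjective (Subgroup.center G) wq
      have hw : w ∈ Subgroup.upperCentralSeries G (i + 2) := by
        rw [← Subgroup.comap_upperCentralSeries_quotient_center (i + 1), Subgroup.mem_comap]
        exact hwq
      -- (w ^ n)⁻¹ * z is central
      have hu : (w ^ n)⁻¹ * z ∈ Subgroup.center G := by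
        rw [← QuotientGroup.ker_mk' (Subgroup.center G), MonoidHom.mem_ker, map_mul, map_inv,
          map_pow, hwqn, inv_mul_cancel]
      obtain ⟨x, hxmem, hxn⟩ : ∃ x ∈ Subgroup.center G, x ^ n = (w ^ n)⁻¹ * z := by
        obtain ⟨x, hx⟩ := hdiv ((w ^ n)⁻¹ * z) n hn
        exact ⟨x, root_central (t + 1) G hdiv hs x n hn (hx.symm ▸ hu), hx⟩
      refine ⟨w * x, ?_, ?_⟩
      · exact Subgroup.mul_mem _ hw
          ((Subgroup.upperCentralSeries_mono G (Nat.succ_le_succ (Nat.zero_le _)))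
            ((Subgroup.upperCentralSeries_one G).symm ▸ hxmem))
      · have hcwx : Commute w x := ((Subgroup.mem_center_iff.mp hxmem) w)
        rw [hcwx.mul_pow, hxn, ← mul_assoc, mul_inv_cancel, one_mul]

/-- In a divisible nilpotent group of class `s`, every term `Z_i(G)`
(`1 ≤ i ≤ s`) of the upper central series is divisible. -/
theorem upperCentralSeries_divisible {G : Type*} [Group G]
    (hdiv : ∀ g : G, ∀ n : ℕ, 0 < n → ∃ h : G, h ^ n = g)
    (s : ℕ) (hs : _root_.upperCentralSeries G s = ⊤)
    (i : ℕ) (hi1 : 1 ≤ i) (his : i ≤ s) :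
    ∀ z ∈ _root_.upperCentralSeries G i, ∀ n : ℕ, 0 < n →
      ∃ w ∈ _root_.upperCentralSeries G i, w ^ n = z := by
  obtain ⟨j, rfl⟩ := Nat.exists_eq_add_of_le' hi1
  exact ucs_div_aux j G hdiv s hs
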